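/- arXiv:2304.05693 — 2 statements merged into one kernel-verified Lean document; each statement's English description precedes it below -/
import Mathlib

section
/- Let e : ℕ → ℝ^p satisfy e(k+1) = A_k e(k) + h ξ(k) where each A_k ∈ ℝ^{p×p} is symmetric and satisfies A_k + A_k² ≤ −hω I for some h, ω > 0, and ‖ξ(k)‖ ≤ ξ̄ for all k. Then V(k) = ½‖e(k)‖² satisfies V(k+1) − V(k) ≤ −hω ‖e(k)‖² + h ξ̄ ‖e(k)‖ + h² ξ̄² for all k. -/
open Matrix
open scoped RealInnerProductSpace

/-- Discrete Lyapunov decrement estimate of Theorem 2: if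
`e(k+1) = A_k e(k) + h ξ(k)` with each `A_k` symmetric satisfying
`A_k + A_k² ≤ −hω I` and `‖ξ(k)‖ ≤ ξ̄`, then `V(k) = ½‖e(k)‖²` satisfies
`V(k+1) − V(k) ≤ −hω‖e(k)‖² + hξ̄‖e(k)‖ + h²ξ̄²`. -/
theorem stmt_10 (p : ℕ) (h ω ξbar : ℝ) (hh : 0 < h) (hω : 0 < ω)
    (A : ℕ → Matrix (Fin p) (Fin p) ℝ) (hAsymm : ∀ k, (A k).IsSymm)
    (hA : ∀ k (x : EuclideanSpace ℝ (Fin p)),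
      ⟪(Matrix.toEuclideanLin (A k + A k * A k)) x, x⟫ ≤ -(h * ω) * ‖x‖ ^ 2)
    (e ξ : ℕ → EuclideanSpace ℝ (Fin p)) (hξ : ∀ k, ‖ξ k‖ ≤ ξbar)
    (he : ∀ k, e (k + 1) = (Matrix.toEuclideanLin (A k)) (e k) + h • ξ k) :
    ∀ k, (1 / 2) * ‖e (k + 1)‖ ^ 2 - (1 / 2) * ‖e k‖ ^ 2 ≤
      -(h * ω) * ‖e k‖ ^ 2 + h * ξbar * ‖e k‖ + h ^ 2 * ξbar ^ 2 := by
  intro k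
  set T := Matrix.toEuclideanLin (A k) with hT
  set x := e k
  have hherm : (A k).IsHermitian := by
    rw [Matrix.IsHermitian, Matrix.conjTranspose_eq_transpose_of_trivial]
    exact hAsymm k
  have hsym : T.IsSymmetric := Matrix.isHermitian_iff_isSymmetric.mp hherm
  -- composition fact
  have hmul : ∀ y, Matrix.toEuclideanLin (A k * A k) y = T (T y) := by
    intro y
    simp [Matrix.toEuclideanLin_apply, hT, Matrix.mulVec_mulVec]
  -- key quadratic inequality
  have hkey : ⟪T x, x⟫ + ‖T x‖ ^ 2 ≤ -(h * ω) * ‖x‖ ^ 2 := by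
    have := hA k x
    rw [map_add] at this
    simp only [LinearMap.add_apply, hmul] at this
    rw [inner_add_left] at this
    have hTT : ⟪T (T x), x⟫ = ‖T x‖ ^ 2 := by
      rw [hsym (T x) x, real_inner_self_eq_norm_sq]
    linarith [this, hTT.symm.le, hTT.le]
  have hcs : -(‖T x‖ * ‖x‖) ≤ ⟪T x, x⟫ := neg_le_of_neg_le
    (by linarith [abs_le.mp (abs_real_inner_le_norm (T x) x)])
  have ha0 : (0:ℝ) ≤ ‖T x‖ := norm_nonneg _
  have hc0 : (0:ℝ) ≤ ‖x‖ := norm_nonneg _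
  have hωc : 0 < h * ω := mul_pos hh hω
  -- a ≤ c
  have hac : ‖T x‖ ≤ ‖x‖ := by nlinarith [sq_nonneg (‖x‖ : ℝ), sq_nonneg ‖T x‖]
  have hξ0 : ‖ξ k‖ ≤ ξbar := hξ k
  have hξnn : (0:ℝ) ≤ ξbar := le_trans (norm_nonneg _) hξ0
  have hj : ⟪T x, ξ k⟫ ≤ ‖T x‖ * ξbar := by
    calc ⟪T x, ξ k⟫ ≤ ‖T x‖ * ‖ξ k‖ := real_inner_le_norm _ _
    _ ≤ ‖T x‖ * ξbar := by nlinarith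
  -- expand ΔV
  have hexp : ‖e (k + 1)‖ ^ 2 =
      ‖T x‖ ^ 2 + 2 * (h * ⟪T x, ξ k⟫) + h ^ 2 * ‖ξ k‖ ^ 2 := by
    rw [he k, norm_add_sq_real, real_inner_smul_right, norm_smul]
    have : ‖(h:ℝ)‖ = h := abs_of_pos hh
    rw [this]
    ring
  rw [hexp]
  have h1 : ‖T x‖ ^ 2 - ‖T x‖ * ‖x‖ ≤ -(h * ω) * ‖x‖ ^ 2 := by linarith
  have h2 : (1/2) * ‖T x‖ ^ 2 - (1/2) * ‖x‖ ^ 2 ≤ -(h * ω) * ‖x‖ ^ 2 := by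
    nlinarith [sq_nonneg (‖T x‖ - ‖x‖)]
  have h3 : h * ⟪T x, ξ k⟫ ≤ h * ξbar * ‖x‖ := by
    have : ⟪T x, ξ k⟫ ≤ ‖x‖ * ξbar := le_trans hj (by nlinarith)
    nlinarith
  have h4 : (1/2) * (h ^ 2 * ‖ξ k‖ ^ 2) ≤ h ^ 2 * ξbar ^ 2 := by
    have hsq : ‖ξ k‖ ^ 2 ≤ ξbar ^ 2 := by
      have := mul_self_le_mul_self (norm_nonneg (ξ k)) hξ0
      nlinarith
    nlinarith [sq_nonneg h]
  linarith
end

section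
/- Consider the scalar discrete SIS dynamics: for i ∈ {1,…,n}, x_i(k+1) = h(1 − x_i(k)) Σ_{j=1}^n w_{ij} d_j x_j(k) + (1 − h δ_i) x_i(k), with h > 0, w_{ij} ≥ 0, d_j ≥ 0, δ_i ≥ 0. If h δ_i ≤ 1 and h Σ_{j=1}^n w_{ij} d_j ≤ 1 for all i, then the hypercube [0,1]^n is forward invariant: x(k) ∈ [0,1]^n implies x(k+1) ∈ [0,1]^n. -/
open Finset

/-- Forward invariance of `[0,1]^n` for the discrete SIS epidemic dynamics
`x_i⁺ = h(1 − x_i) Σ_j w_{ij} d_j x_j + (1 − hδ_i) x_i` under the step-size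
conditions `hδ_i ≤ 1` and `h Σ_j w_{ij} d_j ≤ 1`. -/
theorem stmt_12 (n : ℕ) (h : ℝ) (hh : 0 < h)
    (w : Fin n → Fin n → ℝ) (hw : ∀ i j, 0 ≤ w i j)
    (d : Fin n → ℝ) (hd : ∀ j, 0 ≤ d j)
    (δ : Fin n → ℝ) (hδ : ∀ i, 0 ≤ δ i)
    (hδ1 : ∀ i, h * δ i ≤ 1)
    (hw1 : ∀ i, h * ∑ j, w i j * d j ≤ 1)
    (x : Fin n → ℝ) (hx : ∀ i, x i ∈ Set.Icc (0 : ℝ) 1) :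
    ∀ i, h * (1 - x i) * (∑ j, w i j * d j * x j) + (1 - h * δ i) * x i ∈
      Set.Icc (0 : ℝ) 1 := by
  intro i
  obtain ⟨hx0, hx1⟩ := hx i
  have hSnn : 0 ≤ ∑ j, w i j * d j * x j := by
    apply Finset.sum_nonneg
    intro j _
    exact mul_nonneg (mul_nonneg (hw i j) (hd j)) ((hx j).1)
  have hSle : ∑ j, w i j * d j * x j ≤ ∑ j, w i j * d j := by
    apply Finset.sum_le_sum
    intro j _
    nlinarith [mul_nonneg (hw i j) (hd j), (hx j).2]
  constructor
  · have h1 : 0 ≤ h * (1 - x i) * (∑ j, w i j * d j * x j) :=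
      mul_nonneg (mul_nonneg hh.le (by linarith)) hSnn
    have h2 : 0 ≤ (1 - h * δ i) * x i :=
      mul_nonneg (by linarith [hδ1 i]) hx0
    linarith
  · have key : h * (1 - x i) * (∑ j, w i j * d j * x j) ≤ 1 - x i := by
      have : h * (1 - x i) * (∑ j, w i j * d j * x j)
          ≤ (1 - x i) * (h * ∑ j, w i j * d j) := by
        have := mul_nonneg (mul_nonneg hh.le (by linarith : (0:ℝ) ≤ 1 - x i))
          (sub_nonneg.mpr hSle)
        nlinarith
      nlinarith [hw1 i, mul_nonneg hh.le hSnn]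
    nlinarith [mul_nonneg (mul_nonneg hh.le (hδ i)) hx0]
end
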